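/- For any closure operator μ on 2^U with U finite, any two nonredundant covers α and β of μ have the same cardinality, and consequently the pair (μ, {nonredundant functions α ⊆ μ}) is a matroid whose bases are the nonredundant covers of μ: the set of nonredundant functions is hereditary, and for nonredundant covers α ≠ β and any (X,C) ∈ α \ β there exists (Y,C) ∈ β \ α such that (α \ {(X,C)}) ∪ {(Y,C)} is a nonredundant cover. -/

import Mathlib

open Set

variable {U : Type*}

/-- A closure operator on the power set of `U`: inclusion, monotonicity, idempotence. -/
def IsClosure (μ : Set U → Set U) : Prop :=
  (∀ X, X ⊆ μ X) ∧ (∀ X Y : Set U, X ⊆ Y → μ X ⊆ μ Y) ∧ (∀ X, μ (μ X) = μ X)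

/-- `K` is a key of `μ`: no proper subset of `K` has the same closure. -/
def IsKey (μ : Set U → Set U) (K : Set U) : Prop :=
  ∀ S : Set U, S ⊂ K → μ S ≠ μ K

/-- One step of the Extension-by-Closure recurrence for a set of pairs `α`. -/
def ecStep (α : Set (Set U × Set U)) (X : Set U) : Set U :=
  X ∪ ⋃ p ∈ {q ∈ α | q.1 ⊆ X}, p.2

/-- The iterates `Xα_t` of the Extension-by-Closure recurrence. -/
def ecIter (α : Set (Set U × Set U)) (X : Set U) : ℕ → Set U
  | 0 => X
  | n + 1 => ecStep α (ecIter α X n)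

/-- `Xα⁺`: the eventual stable value of the increasing recurrence
(for finite `U` the union over all iterates is the stable limit). -/
def extC (α : Set (Set U × Set U)) : Set U → Set U :=
  fun X => ⋃ n, ecIter α X n

/-- The closure `μ` viewed as a set of pairs `(X, Xμ)`. -/
def graphOf (μ : Set U → Set U) : Set (Set U × Set U) :=
  {p | p.2 = μ p.1}

/-- `α` is a cover of `μ`: a subset of `μ` (as pairs) with `α⁺ = μ`. -/
def IsCover (μ : Set U → Set U) (α : Set (Set U × Set U)) : Prop :=
  α ⊆ graphOf μ ∧ extC α = μ

/-- A nonredundant cover of `μ`: a cover no proper subset of which has closure `μ`. -/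
def NonredundantCover (μ : Set U → Set U) (α : Set (Set U × Set U)) : Prop :=
  IsCover μ α ∧ ∀ β : Set (Set U × Set U), β ⊂ α → extC β ≠ μ

/-- A nonredundant function: a subset of some nonredundant cover of `μ`. -/
def NonredundantFn (μ : Set U → Set U) (α : Set (Set U × Set U)) : Prop :=
  ∃ β : Set (Set U × Set U), NonredundantCover μ β ∧ α ⊆ β

section Lemmas

variable {μ : Set U → Set U} {α β : Set (Set U × Set U)} {X Y Z V C : Set U}

lemma subset_ecStep : X ⊆ ecStep α X := Set.subset_union_left

lemma mem_ecStep {x : U} : x ∈ ecStep α X ↔ x ∈ X ∨ ∃ p ∈ α, p.1 ⊆ X ∧ x ∈ p.2 := by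
  simp only [ecStep, Set.mem_union, Set.mem_iUnion, Set.mem_setOf_eq, exists_prop]
  tauto

lemma ecStep_mono (hab : α ⊆ β) (hxy : X ⊆ Y) : ecStep α X ⊆ ecStep β Y := by
  intro x hx
  rw [mem_ecStep] at hx ⊢
  rcases hx with h | ⟨p, hp, h1, h2⟩
  · exact Or.inl (hxy h)
  · exact Or.inr ⟨p, hab hp, h1.trans hxy, h2⟩

lemma ecIter_mono (hab : α ⊆ β) (hxy : X ⊆ Y) : ∀ n, ecIter α X n ⊆ ecIter β Y n
  | 0 => hxy
  | n + 1 => ecStep_mono hab (ecIter_mono hab hxy n)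

lemma ecIter_succ_subset (n : ℕ) : ecIter α X n ⊆ ecIter α X (n + 1) := subset_ecStep

lemma subset_extC : X ⊆ extC α X := Set.subset_iUnion (ecIter α X) 0

lemma extC_mono (hab : α ⊆ β) (hxy : X ⊆ Y) : extC α X ⊆ extC β Y :=
  Set.iUnion_mono fun n => ecIter_mono hab hxy n

lemma extC_least (hxz : X ⊆ Z) (hcl : ∀ p ∈ α, p.1 ⊆ Z → p.2 ⊆ Z) : extC α X ⊆ Z := by
  apply Set.iUnion_subset
  intro n
  induction n with
  | zero => exact hxz
  | succ n ih =>
    intro x hx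
    rw [show ecIter α X (n + 1) = ecStep α (ecIter α X n) from rfl, mem_ecStep] at hx
    rcases hx with h | ⟨p, hp, h1, h2⟩
    · exact ih h
    · exact hcl p hp (h1.trans ih) h2

lemma exists_stable [Finite U] (α : Set (Set U × Set U)) (X : Set U) :
    ∃ n, ecStep α (ecIter α X n) = ecIter α X n := by
  by_contra h
  push_neg at h
  have hss : ∀ n, ecIter α X n ⊂ ecIter α X (n + 1) := fun n =>
    HasSubset.Subset.ssubset_of_ne (ecIter_succ_subset n) (fun e => h n e.symm)
  have hcard : ∀ n, n ≤ (ecIter α X n).ncard := by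
    intro n
    induction n with
    | zero => exact Nat.zero_le _
    | succ n ih =>
      have := Set.ncard_lt_ncard (hss n) (Set.toFinite _)
      omega
  have h1 := hcard ((Set.univ : Set U).ncard + 1)
  have h2 : (ecIter α X ((Set.univ : Set U).ncard + 1)).ncard ≤ (Set.univ : Set U).ncard :=
    Set.ncard_le_ncard (Set.subset_univ _) (Set.toFinite _)
  omega

lemma extC_eq_iter [Finite U] (α : Set (Set U × Set U)) (X : Set U) :
    ∃ n, extC α X = ecIter α X n ∧ ecStep α (ecIter α X n) = ecIter α X n := by
  obtain ⟨n, hn⟩ := exists_stable α X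
  refine ⟨n, ?_, hn⟩
  have hconst : ∀ m, ecIter α X (n + m) = ecIter α X n := by
    intro m
    induction m with
    | zero => rfl
    | succ m ih => show ecStep α (ecIter α X (n + m)) = _; rw [ih, hn]
  apply Set.Subset.antisymm
  · apply Set.iUnion_subset
    intro m
    rcases le_or_gt m n with h | h
    · exact (monotone_nat_of_le_succ (f := ecIter α X) ecIter_succ_subset) h
    · have heq : ecIter α X m = ecIter α X n := by
        have h2 := hconst (m - n)
        rwa [Nat.add_sub_cancel' h.le] at h2
      exact heq.le
  · exact Set.subset_iUnion _ n

lemma extC_closed [Finite U] (p : Set U × Set U) (hp : p ∈ α) (h : p.1 ⊆ extC α X) :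
    p.2 ⊆ extC α X := by
  obtain ⟨n, hEq, hfix⟩ := extC_eq_iter α X
  rw [hEq] at h ⊢
  rw [← hfix]
  intro x hx
  rw [mem_ecStep]
  exact Or.inr ⟨p, hp, h, hx⟩

lemma extC_trans [Finite U] (h : Y ⊆ extC α X) : extC α Y ⊆ extC α X :=
  extC_least h fun p hp h1 => extC_closed p hp h1

lemma extC_le_mu (hμ : IsClosure μ) (hg : α ⊆ graphOf μ) : extC α X ⊆ μ X := by
  apply extC_least (hμ.1 X)
  intro p hp h1
  have h2 : p.2 = μ p.1 := hg hp
  rw [h2]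
  calc μ p.1 ⊆ μ (μ X) := hμ.2.1 _ _ h1
  _ = μ X := hμ.2.2 X

/-- Pairs of `α` whose right-hand side is not `C`. -/
def ncls (α : Set (Set U × Set U)) (C : Set U) : Set (Set U × Set U) := {q ∈ α | q.2 ≠ C}

lemma ncls_subset : ncls α C ⊆ α := fun _ h => h.1

lemma ncls_subset_diff {p : Set U × Set U} (hpC : p.2 = C) : ncls α C ⊆ α \ {p} :=
  fun r hr => ⟨hr.1, fun e => hr.2 (by rw [Set.mem_singleton_iff] at e; rw [e, hpC])⟩

lemma mu_subset_ncls [Finite U] (hμ : IsClosure μ) (hcov : IsCover μ α) (h : ¬C ⊆ μ V) :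
    μ V ⊆ extC (ncls α C) V := by
  rw [← hcov.2]
  apply extC_least subset_extC
  intro p hp h1
  have hZ : extC (ncls α C) V ⊆ μ V := extC_le_mu hμ (ncls_subset.trans hcov.1)
  have h2 : p.2 = μ p.1 := hcov.1 hp
  have h3 : p.2 ⊆ μ V := by
    rw [h2]
    calc μ p.1 ⊆ μ (μ V) := hμ.2.1 _ _ (h1.trans hZ)
    _ = μ V := hμ.2.2 V
  have h4 : p.2 ≠ C := fun e => h (e ▸ h3)
  exact extC_closed p ⟨hp, h4⟩ h1

lemma ncls_extC_le [Finite U] (hμ : IsClosure μ) (hcovα : IsCover μ α) (hcovβ : IsCover μ β)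
    (hX : μ X = C) : extC (ncls β C) X ⊆ extC (ncls α C) X := by
  apply extC_least subset_extC
  intro p hp h1
  have hZC : extC (ncls α C) X ⊆ C := hX ▸ extC_le_mu hμ (ncls_subset.trans hcovα.1)
  have h2 : p.2 = μ p.1 := hcovβ.1 hp.1
  have h3 : μ p.1 ⊆ C := by
    calc μ p.1 ⊆ μ C := hμ.2.1 _ _ (h1.trans hZC)
    _ = C := by rw [← hX, hμ.2.2]
  have h4 : ¬C ⊆ μ p.1 := fun hc => hp.2 (by rw [h2]; exact Set.Subset.antisymm h3 hc)
  have h5 := mu_subset_ncls (α := α) (C := C) (V := p.1) hμ hcovα h4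
  rw [h2]
  exact h5.trans (extC_trans h1)

lemma removal_cover [Finite U] {p : Set U × Set U} (hμ : IsClosure μ) (hcov : IsCover μ α)
    (hp : p ∈ α) (h : p.2 ⊆ extC (α \ {p}) p.1) : extC (α \ {p}) = μ := by
  funext Z
  apply Set.Subset.antisymm
  · exact extC_le_mu hμ (Set.diff_subset.trans hcov.1)
  · rw [← hcov.2]
    apply extC_least subset_extC
    intro q hq h1
    by_cases hqp : q = p
    · subst hqp
      exact h.trans (extC_trans h1)
    · exact extC_closed q ⟨hq, hqp⟩ h1

lemma nonred_not_subset [Finite U] {p : Set U × Set U} (hμ : IsClosure μ)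
    (hα : NonredundantCover μ α) (hp : p ∈ α) : ¬p.2 ⊆ extC (α \ {p}) p.1 := fun h =>
  hα.2 (α \ {p}) ((Set.sdiff_singleton_ssubset).mpr hp) (removal_cover hμ hα.1 hp h)

lemma unique_pair [Finite U] {p q : Set U × Set U} (hμ : IsClosure μ)
    (hα : NonredundantCover μ α) (hp : p ∈ α) (hq : q ∈ α) (h2 : q.2 = p.2)
    (h1 : q.1 ⊆ extC (ncls α p.2) p.1) : q = p := by
  by_contra hne
  apply nonred_not_subset hμ hα hp
  have hq' : q ∈ α \ {p} := ⟨hq, hne⟩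
  have h1' : q.1 ⊆ extC (α \ {p}) p.1 := h1.trans (extC_mono (ncls_subset_diff rfl) subset_rfl)
  have h3 := extC_closed q hq' h1'
  rw [h2] at h3
  exact h3

lemma exists_partner [Finite U] {p : Set U × Set U} (hμ : IsClosure μ)
    (hα : NonredundantCover μ α) (hβ : IsCover μ β) (hp : p ∈ α) :
    ∃ Y, (Y, p.2) ∈ β ∧ Y ⊆ extC (ncls α p.2) p.1 := by
  have hgX : p.2 = μ p.1 := hα.1.1 hp
  have hnotC : ¬p.2 ⊆ extC (ncls α p.2) p.1 := fun h =>
    nonred_not_subset hμ hα hp (h.trans (extC_mono (ncls_subset_diff rfl) subset_rfl))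
  by_contra hcon
  push_neg at hcon
  apply hnotC
  have hDμ : extC (ncls α p.2) p.1 ⊆ μ p.1 := extC_le_mu hμ (ncls_subset.trans hα.1.1)
  have hkey : extC β p.1 ⊆ extC (ncls α p.2) p.1 := by
    apply extC_least subset_extC
    intro r hr h1
    by_cases hrC : r.2 = p.2
    · exfalso
      have hre : (r.1, p.2) = r := by rw [← hrC]
      exact hcon r.1 (hre ▸ hr) h1
    · have h2 : r.2 = μ r.1 := hβ.1 hr
      have h3 : μ r.1 ⊆ μ p.1 := by
        calc μ r.1 ⊆ μ (μ p.1) := hμ.2.1 _ _ (h1.trans hDμ)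
        _ = μ p.1 := hμ.2.2 _
      have h4 : ¬p.2 ⊆ μ r.1 := fun hc => hrC (by
        rw [h2, hgX]
        exact Set.Subset.antisymm h3 (hgX ▸ hc))
      have h5 := mu_subset_ncls (α := α) (C := p.2) (V := r.1) hμ hα.1 h4
      rw [h2]
      exact h5.trans (extC_trans h1)
  calc p.2 = μ p.1 := hgX
  _ = extC β p.1 := by rw [hβ.2]
  _ ⊆ _ := hkey

lemma ncard_le_of_nonred [Finite U] (hμ : IsClosure μ)
    (hα : NonredundantCover μ α) (hβ : NonredundantCover μ β) : α.ncard ≤ β.ncard := by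
  classical
  have H : ∀ p, p ∈ α →
      ∃ q : Set U × Set U, q ∈ β ∧ q.2 = p.2 ∧ q.1 ⊆ extC (ncls α p.2) p.1 := by
    intro p hp
    obtain ⟨Y, h1, h2⟩ := exists_partner hμ hα hβ.1 hp
    exact ⟨(Y, p.2), h1, rfl, h2⟩
  choose F hF1 hF2 hF3 using H
  set f : Set U × Set U → Set U × Set U := fun p => if h : p ∈ α then F p h else p with hf
  apply Set.ncard_le_ncard_of_injOn f
  · intro p hp
    simp only [hf, dif_pos hp]
    exact hF1 p hp
  · intro p1 h1 p2 h2 heq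
    simp only [hf, dif_pos h1, dif_pos h2] at heq
    have hqβ : F p1 h1 ∈ β := hF1 p1 h1
    have hq2a : (F p1 h1).2 = p1.2 := hF2 p1 h1
    have hq2b : (F p1 h1).2 = p2.2 := by rw [heq]; exact hF2 p2 h2
    have hsub1 : (F p1 h1).1 ⊆ extC (ncls α p1.2) p1.1 := hF3 p1 h1
    have hsub2 : (F p1 h1).1 ⊆ extC (ncls α p2.2) p2.1 := by rw [heq]; exact hF3 p2 h2
    obtain ⟨X', hX'α, hX'sub⟩ := exists_partner hμ hβ hα.1 hqβ
    have hddeq : extC (ncls β (F p1 h1).2) (F p1 h1).1 ⊆ extC (ncls α (F p1 h1).2) (F p1 h1).1 :=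
      ncls_extC_le hμ hα.1 hβ.1 (hβ.1.1 hqβ).symm
    have key : ∀ p : Set U × Set U, p ∈ α → (F p1 h1).2 = p.2 →
        (F p1 h1).1 ⊆ extC (ncls α p.2) p.1 → (X', (F p1 h1).2) = p := by
      intro p hp h2' hsub
      apply unique_pair hμ hα hp hX'α h2'
      have hstep : X' ⊆ extC (ncls α p.2) (F p1 h1).1 := by
        rw [← h2']
        exact hX'sub.trans hddeq
      exact hstep.trans (extC_trans hsub)
    rw [← key p1 h1 hq2a hsub1, ← key p2 h2 hq2b hsub2]

lemma ncard_eq_of_nonred [Finite U] (hμ : IsClosure μ)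
    (hα : NonredundantCover μ α) (hβ : NonredundantCover μ β) : α.ncard = β.ncard :=
  le_antisymm (ncard_le_of_nonred hμ hα hβ) (ncard_le_of_nonred hμ hβ hα)

lemma exists_nonred_subcover [Finite U] (μ : Set U → Set U) :
    ∀ (n : ℕ) (δ : Set (Set U × Set U)), δ.ncard ≤ n → δ ⊆ graphOf μ → extC δ = μ →
      ∃ δ', δ' ⊆ δ ∧ NonredundantCover μ δ' := by
  intro n
  induction n with
  | zero =>
    intro δ hn hg he
    refine ⟨δ, subset_rfl, ⟨hg, he⟩, ?_⟩
    intro ε hε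
    exfalso
    have hδe : δ = ∅ := (Set.ncard_eq_zero (Set.toFinite δ)).mp (Nat.le_zero.mp hn)
    rw [hδe] at hε
    exact not_ssubset_of_subset (Set.empty_subset ε) hε
  | succ n ih =>
    intro δ hn hg he
    by_cases h : ∀ ε, ε ⊂ δ → extC ε ≠ μ
    · exact ⟨δ, subset_rfl, ⟨hg, he⟩, h⟩
    · push_neg at h
      obtain ⟨ε, hss, heε⟩ := h
      have hlt : ε.ncard < δ.ncard := Set.ncard_lt_ncard hss (Set.toFinite δ)
      obtain ⟨δ', hd1, hd2⟩ := ih ε (by omega) (hss.subset.trans hg) heε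
      exact ⟨δ', hd1.trans hss.subset, hd2⟩

lemma exchange_lemma [Finite U] (hμ : IsClosure μ)
    (hα : NonredundantCover μ α) (hβ : NonredundantCover μ β) {X C : Set U}
    (hXα : (X, C) ∈ α) (hXβ : (X, C) ∉ β) :
    ∃ Y, (Y, C) ∈ β \ α ∧ NonredundantCover μ (insert (Y, C) (α \ {(X, C)})) := by
  obtain ⟨Y, hYβ, hYD⟩ := exists_partner hμ hα hβ.1 hXα
  have hYnα : (Y, C) ∉ α := by
    intro h
    have heq := unique_pair hμ hα hXα h rfl hYD
    exact hXβ (heq ▸ hYβ)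
  set γ := insert ((Y, C) : Set U × Set U) (α \ {(X, C)}) with hγ
  have hγg : γ ⊆ graphOf μ := by
    rw [hγ]
    exact Set.insert_subset (hβ.1.1 hYβ) (Set.diff_subset.trans hα.1.1)
  have hsub' : ncls α C ⊆ γ :=
    fun r hr => Set.subset_insert _ _ ((ncls_subset_diff rfl) hr)
  have hγcov : extC γ = μ := by
    funext Z
    apply Set.Subset.antisymm
    · exact extC_le_mu hμ hγg
    · rw [← hα.1.2]
      apply extC_least subset_extC
      intro r hr h1
      by_cases hrp : r = (X, C)
      · subst hrp
        have hYW : Y ⊆ extC γ Z :=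
          (hYD.trans (extC_mono hsub' subset_rfl)).trans (extC_trans h1)
        exact extC_closed (Y, C) (Set.mem_insert _ _) hYW
      · exact extC_closed r (Set.subset_insert _ _ ⟨hr, hrp⟩) h1
  have hcard : γ.ncard = α.ncard := by
    have hnm : (Y, C) ∉ α \ {(X, C)} := fun h => hYnα h.1
    rw [hγ, Set.ncard_insert_of_notMem hnm (Set.toFinite _),
      Set.ncard_diff_singleton_of_mem hXα]
    have hpos : 0 < α.ncard := (Set.ncard_pos (Set.toFinite α)).mpr ⟨_, hXα⟩
    omega
  refine ⟨Y, ⟨hYβ, hYnα⟩, ⟨hγg, hγcov⟩, ?_⟩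
  intro δ hδ hext
  obtain ⟨δ', hδ'sub, hδ'⟩ :=
    exists_nonred_subcover μ δ.ncard δ le_rfl (hδ.subset.trans hγg) hext
  have heq : δ'.ncard = α.ncard := ncard_eq_of_nonred hμ hδ' hα
  have hlt : δ'.ncard < γ.ncard :=
    Set.ncard_lt_ncard (ssubset_of_subset_of_ssubset hδ'sub hδ) (Set.toFinite γ)
  omega

end Lemmas

theorem matroid_of_closure [Finite U] (μ : Set U → Set U) (hμ : IsClosure μ) :
    (∀ α β : Set (Set U × Set U), NonredundantCover μ α → NonredundantCover μ β →
      α.ncard = β.ncard) ∧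
    (∀ α γ : Set (Set U × Set U), NonredundantFn μ α → γ ⊆ α → NonredundantFn μ γ) ∧
    (∀ α β : Set (Set U × Set U), NonredundantCover μ α → NonredundantCover μ β →
      α ≠ β → ∀ X C : Set U, (X, C) ∈ α \ β →
        ∃ Y : Set U, (Y, C) ∈ β \ α ∧
          NonredundantCover μ (insert (Y, C) (α \ {(X, C)}))) := by
  refine ⟨fun α β hα hβ => ncard_eq_of_nonred hμ hα hβ,
    fun α γ hα hγ => ?_,
    fun α β hα hβ hne X C hmem => exchange_lemma hμ hα hβ hmem.1 hmem.2⟩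
  obtain ⟨β, hβ, hsub⟩ := hα
  exact ⟨β, hβ, hγ.trans hsub⟩
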